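/- Let q ≥ 1 and Y, a, b, S ≥ 0 be real numbers. If Y^q ≤ a·Y^(q-1) + (b + S), then Y - b^(1/q) ≤ a + S^(1/q). -/
import Mathlib


theorem stmt_0 (q Y a b S : ℝ) (hq : 1 ≤ q) (hY : 0 ≤ Y) (ha : 0 ≤ a)
    (hb : 0 ≤ b) (hS : 0 ≤ S)
    (h : Y ^ q ≤ a * Y ^ (q - 1) + (b + S)) :
    Y - b ^ (1 / q) ≤ a + S ^ (1 / q) := by
  have hq0 : 0 < q := lt_of_lt_of_le one_pos hq
  set x : ℝ := b ^ (1 / q)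
  set y : ℝ := S ^ (1 / q)
  have hx0 : 0 ≤ x := Real.rpow_nonneg hb _
  have hy0 : 0 ≤ y := Real.rpow_nonneg hS _
  have hT0 : 0 ≤ x + y := add_nonneg hx0 hy0
  rw [sub_le_iff_le_add]
  by_contra hlt
  push_neg at hlt
  have hYa : a + (x + y) < Y := by linarith
  have hYpos : 0 < Y := lt_of_le_of_lt (by positivity) hYa
  have hTY : x + y ≤ Y := le_of_lt (lt_of_le_of_lt (le_add_of_nonneg_left ha) hYa)
  have hpow : Y ^ q = Y * Y ^ (q - 1) := by
    rw [← Real.rpow_one_add' (le_of_lt hYpos) (by linarith)]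
    ring_nf
  have hYq1pos : 0 < Y ^ (q - 1) := Real.rpow_pos_of_pos hYpos _
  have h1 : (a + (x + y)) * Y ^ (q - 1) < Y ^ q := by
    rw [hpow]; exact mul_lt_mul_of_pos_right hYa hYq1pos
  have hmono1 : x ^ (q - 1) ≤ Y ^ (q - 1) :=
    Real.rpow_le_rpow hx0 (by linarith) (by linarith)
  have hmono2 : y ^ (q - 1) ≤ Y ^ (q - 1) :=
    Real.rpow_le_rpow hy0 (by linarith) (by linarith)
  have hbq : x * x ^ (q - 1) = b := by
    rw [← Real.rpow_one_add' hx0 (by linarith)]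
    simp only [add_sub_cancel]
    rw [← Real.rpow_mul hb, one_div, inv_mul_cancel₀ (ne_of_gt hq0), Real.rpow_one]
  have hSq : y * y ^ (q - 1) = S := by
    rw [← Real.rpow_one_add' hy0 (by linarith)]
    simp only [add_sub_cancel]
    rw [← Real.rpow_mul hS, one_div, inv_mul_cancel₀ (ne_of_gt hq0), Real.rpow_one]
  have h2 : b + S ≤ (x + y) * Y ^ (q - 1) := by
    have : x * x ^ (q - 1) + y * y ^ (q - 1) ≤ x * Y ^ (q - 1) + y * Y ^ (q - 1) :=
      add_le_add (mul_le_mul_of_nonneg_left hmono1 hx0)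
        (mul_le_mul_of_nonneg_left hmono2 hy0)
    rw [hbq, hSq] at this
    linarith [this]
  nlinarith [h1, h2, h]
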